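/- The function u(x,t) = −2i/(i + 2x) is a solution of the x-nonlocal focusing NLS equation i u_t = u_{xx} + 2 u² û, where û(x,t) = conj(u(−x,t)); moreover its denominator i + 2x never vanishes for real x, so u is globally defined on ℝ². -/

import Mathlib

noncomputable def u11 (x t : ℝ) : ℂ := (-2 * Complex.I) / (Complex.I + 2 * (x : ℂ))

lemma hne11 (x : ℝ) : Complex.I + 2 * (x : ℂ) ≠ 0 := by
  intro h
  have := congrArg Complex.im h
  simp [Complex.add_im] at this

lemma hd_denom (x : ℝ) : HasDerivAt (fun x' : ℝ => Complex.I + 2 * (x' : ℂ)) 2 x := by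
  have h1 : HasDerivAt (fun x' : ℝ => ((x' : ℝ) : ℂ)) 1 x :=
    (hasDerivAt_id x).ofReal_comp
  have := (h1.const_mul (2 : ℂ)).const_add Complex.I
  simpa using this

lemma hd1 (x : ℝ) :
    HasDerivAt (fun x' : ℝ => u11 x' 0)
      (4 * Complex.I / (Complex.I + 2 * (x : ℂ)) ^ 2) x := by
  have h : HasDerivAt (fun y : ℝ => -2 * Complex.I / (Complex.I + 2 * (y : ℂ))) _ x :=
    (hasDerivAt_const x (-2 * Complex.I)).div (hd_denom x) (hne11 x)
  have heq : (fun x' : ℝ => u11 x' 0)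
      = fun x' : ℝ => -2 * Complex.I / (Complex.I + 2 * (x' : ℂ)) := rfl
  rw [heq]
  convert h using 1
  have := hne11 x
  field_simp
  ring

lemma hd2 (x : ℝ) :
    HasDerivAt (fun x' : ℝ => 4 * Complex.I / (Complex.I + 2 * (x' : ℂ)) ^ 2)
      (-16 * Complex.I / (Complex.I + 2 * (x : ℂ)) ^ 3) x := by
  have hp : HasDerivAt
      (fun x' : ℝ => (Complex.I + 2 * (x' : ℂ)) * (Complex.I + 2 * (x' : ℂ)))
      (2 * (Complex.I + 2 * (x : ℂ)) + (Complex.I + 2 * (x : ℂ)) * 2) x :=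
    (hd_denom x).mul (hd_denom x)
  have hne2 : (Complex.I + 2 * (x : ℂ)) * (Complex.I + 2 * (x : ℂ)) ≠ 0 :=
    mul_ne_zero (hne11 x) (hne11 x)
  have h : HasDerivAt (fun y : ℝ => 4 * Complex.I /
      ((Complex.I + 2 * (y : ℂ)) * (Complex.I + 2 * (y : ℂ)))) _ x :=
    (hasDerivAt_const x (4 * Complex.I)).div hp hne2
  have hfg : (fun x' : ℝ => 4 * Complex.I / (Complex.I + 2 * (x' : ℂ)) ^ 2)
      = fun x' : ℝ => 4 * Complex.I /
          ((Complex.I + 2 * (x' : ℂ)) * (Complex.I + 2 * (x' : ℂ))) := by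
    funext x'; rw [pow_two]
  rw [hfg]
  convert h using 1
  have := hne11 x
  field_simp
  ring

theorem stmt11 :
    (∀ x : ℝ, Complex.I + 2 * (x : ℂ) ≠ 0) ∧
    ∀ x t : ℝ,
      Complex.I * deriv (fun t' => u11 x t') t =
        iteratedDeriv 2 (fun x' => u11 x' t) x
          + 2 * (u11 x t) ^ 2 * (starRingEnd ℂ) (u11 (-x) t) := by
  refine ⟨hne11, fun x t => ?_⟩
  have hconst : (fun t' : ℝ => u11 x t') = fun _ => u11 x 0 := by
    funext t'; rfl
  rw [hconst, deriv_const]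
  have hxt : (fun x' : ℝ => u11 x' t) = fun x' : ℝ => u11 x' 0 := by
    funext x'; rfl
  rw [hxt]
  have hder1 : deriv (fun x' : ℝ => u11 x' 0)
      = fun x' : ℝ => 4 * Complex.I / (Complex.I + 2 * (x' : ℂ)) ^ 2 := by
    funext x'; exact (hd1 x').deriv
  have h2 : iteratedDeriv 2 (fun x' : ℝ => u11 x' 0) x
      = -16 * Complex.I / (Complex.I + 2 * (x : ℂ)) ^ 3 := by
    rw [iteratedDeriv_succ, iteratedDeriv_one, hder1]
    exact (hd2 x).deriv
  rw [h2]
  have hne := hne11 x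
  have hneg : Complex.I + 2 * ((-x : ℝ) : ℂ) = Complex.I - 2 * (x : ℂ) := by
    push_cast; ring
  have hne' : Complex.I - 2 * (x : ℂ) ≠ 0 := by
    intro h
    have := congrArg Complex.im h
    simp [Complex.sub_im] at this
  have hconj : (starRingEnd ℂ) (u11 (-x) t) = -2 * Complex.I / (Complex.I + 2 * (x : ℂ)) := by
    simp only [u11, hneg, map_div₀, map_mul, map_neg, Complex.conj_I, map_sub,
      Complex.conj_ofNat, Complex.conj_ofReal]
    rw [div_eq_div_iff (by intro h; have := congrArg Complex.im h; simp at this) hne]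
    ring
  rw [hconj]
  simp only [u11, mul_zero]
  field_simp
  linear_combination (16 * Complex.I) * Complex.I_sq
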